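/- Let 3 ≤ k < c, let ε ∈ {−1,+1}, set x = ε·(c^{−1/2},…,c^{−1/2}) ∈ ℝ^c, and let τ ∈ ℂ∖{0} satisfy τ^{2−k} = k·e_k(x); set z = τ·x, g(y) = −(y_1²+⋯+y_c²)/2 + e_k(y), and g̃ = (k−1)/(c−1). Then every diagonal entry of (Hess g)(z) equals −1, every off-diagonal entry of (Hess g)(z) equals g̃, and det((Hess g)(z)) = (−1)^{c−1} · (g̃+1)^{c−1} · (g̃·(c−1) − 1). -/

import Mathlib

open MvPolynomial

/-- The Hessian matrix at `z ∈ ℂ^c` of `g(y) = -(y₁² + ⋯ + y_c²)/2 + e_k(y)`. -/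
noncomputable def hessGesymm (c k : ℕ) (z : Fin c → ℂ) : Matrix (Fin c) (Fin c) ℂ :=
  Matrix.of fun i j =>
    MvPolynomial.eval z (MvPolynomial.pderiv i (MvPolynomial.pderiv j
      (-(MvPolynomial.C (1 / 2 : ℂ) * ∑ l, MvPolynomial.X l ^ 2) +
        MvPolynomial.esymm (Fin c) ℂ k)))

open Finset

namespace Aux16
variable {c : ℕ}

noncomputable def m (t : Finset (Fin c)) : Fin c →₀ ℕ := ∑ l ∈ t, Finsupp.single l 1

lemma m_apply (t : Finset (Fin c)) (j : Fin c) : m t j = if j ∈ t then 1 else 0 := by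
  rw [m, Finset.sum_apply']; simp [Finsupp.single_apply]

lemma m_erase {t : Finset (Fin c)} {j : Fin c} (hj : j ∈ t) :
    m t - Finsupp.single j 1 = m (t.erase j) := by
  rw [m, m, ← Finset.sum_erase_add t _ hj, add_tsub_cancel_right]

lemma eval_monomial_m (z : Fin c → ℂ) (t : Finset (Fin c)) :
    MvPolynomial.eval z (monomial (m t) (1:ℂ)) = ∏ l ∈ t, z l := by
  rw [m, monomial_sum_one]
  show MvPolynomial.eval z (∏ l ∈ t, X l) = _
  simp

lemma pd2 (i j : Fin c) (t : Finset (Fin c)) :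
    pderiv i (pderiv j (monomial (m t) (1:ℂ))) =
    if j ∈ t ∧ i ∈ t.erase j then monomial (m ((t.erase j).erase i)) 1 else 0 := by
  rw [pderiv_monomial]
  by_cases hj : j ∈ t
  · rw [m_erase hj, m_apply, if_pos hj, pderiv_monomial]
    by_cases hi : i ∈ t.erase j
    · rw [m_erase hi, m_apply, if_pos hi, if_pos ⟨hj, hi⟩]
      norm_num
    · rw [m_apply, if_neg hi, if_neg (by tauto)]
      norm_num
  · rw [m_apply, if_neg hj, if_neg (by tauto)]
    norm_num

end Aux16

namespace Aux16
variable {c : ℕ}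

lemma card_filter (k : ℕ) (hk : 2 ≤ k) (i j : Fin c) (hij : i ≠ j) :
    ((powersetCard k (univ : Finset (Fin c))).filter (fun t => j ∈ t ∧ i ∈ t)).card
      = (c - 2).choose (k - 2) := by
  have hce : ((((univ : Finset (Fin c)).erase j).erase i).card) = c - 2 := by
    rw [card_erase_of_mem (by simp [hij]), card_erase_of_mem (by simp), card_univ,
      Fintype.card_fin, Nat.sub_sub]
  have hbij : ((powersetCard k (univ : Finset (Fin c))).filter (fun t => j ∈ t ∧ i ∈ t)).card
      = (powersetCard (k-2) (((univ : Finset (Fin c)).erase j).erase i)).card := by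
    apply Finset.card_bij' (fun t _ => (t.erase j).erase i)
      (fun s _ => insert j (insert i s))
    · intro t ht
      rw [mem_filter, mem_powersetCard] at ht
      obtain ⟨⟨hsub, hcard⟩, hjt, hit⟩ := ht
      rw [insert_erase (mem_erase.2 ⟨hij, hit⟩), insert_erase hjt]
    · intro s hs
      rw [mem_powersetCard] at hs
      obtain ⟨hsub, hcard⟩ := hs
      have his : i ∉ s := fun h => by simpa using (mem_erase.1 (hsub h)).1
      have hjs : j ∉ insert i s := by
        simp only [mem_insert]
        rintro (h | h)
        · exact hij h.symm
        · exact (mem_erase.1 (mem_erase.1 (hsub h)).2).1 rfl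
      rw [erase_insert hjs, erase_insert his]

    · intro t ht
      rw [mem_filter, mem_powersetCard] at ht
      obtain ⟨⟨hsub, hcard⟩, hjt, hit⟩ := ht
      rw [mem_powersetCard]
      refine ⟨erase_subset_erase i (erase_subset_erase j hsub), ?_⟩
      rw [card_erase_of_mem (mem_erase.2 ⟨hij, hit⟩), card_erase_of_mem hjt, hcard, Nat.sub_sub]
    · intro s hs
      rw [mem_powersetCard] at hs
      obtain ⟨hsub, hcard⟩ := hs
      have his : i ∉ s := fun h => by simpa using (mem_erase.1 (hsub h)).1
      have hjs : j ∉ insert i s := by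
        simp only [mem_insert]
        rintro (h | h)
        · exact hij h.symm
        · exact (mem_erase.1 (mem_erase.1 (hsub h)).2).1 rfl
      rw [mem_filter, mem_powersetCard]
      refine ⟨⟨subset_univ _, ?_⟩, mem_insert_self _ _,
        mem_insert_of_mem (mem_insert_self _ _)⟩
      rw [card_insert_of_notMem hjs, card_insert_of_notMem his, hcard]
      omega
  rw [hbij, card_powersetCard, hce]

lemma eval_pd2_esymm (k : ℕ) (hk : 2 ≤ k) (z : Fin c → ℂ) (w : ℂ) (hzw : ∀ l, z l = w)
    (i j : Fin c) :
    MvPolynomial.eval z (pderiv i (pderiv j (esymm (Fin c) ℂ k))) =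
      if i = j then 0 else ((c-2).choose (k-2) : ℂ) * w ^ (k-2) := by
  rw [esymm_eq_sum_monomial]
  simp only [map_sum]
  have key : ∀ t ∈ powersetCard k (univ : Finset (Fin c)),
      MvPolynomial.eval z (pderiv i (pderiv j (monomial (∑ l ∈ t, Finsupp.single l 1) (1:ℂ))))
        = if j ∈ t ∧ i ∈ t.erase j then w ^ (k-2) else 0 := by
    intro t ht
    rw [mem_powersetCard] at ht
    rw [show (∑ l ∈ t, Finsupp.single l 1) = m t from rfl, pd2]
    split_ifs with h
    · rw [eval_monomial_m]
      have hcard : ((t.erase j).erase i).card = k - 2 := by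
        rw [card_erase_of_mem h.2, card_erase_of_mem h.1, ht.2, Nat.sub_sub]
      rw [Finset.prod_congr rfl (fun l _ => hzw l), Finset.prod_const, hcard]
    · simp
  rw [Finset.sum_congr rfl key]
  by_cases hij : i = j
  · subst hij
    rw [if_pos rfl]
    apply Finset.sum_eq_zero
    intro t ht
    rw [if_neg]
    rintro ⟨-, h⟩
    exact (mem_erase.1 h).1 rfl
  · rw [if_neg hij]
    have : ∀ t : Finset (Fin c), (j ∈ t ∧ i ∈ t.erase j) ↔ (j ∈ t ∧ i ∈ t) := by
      intro t; simp [mem_erase, hij]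
    simp only [this]
    rw [Finset.sum_ite, Finset.sum_const_zero, add_zero, Finset.sum_const,
      card_filter k hk i j hij, nsmul_eq_mul]

lemma eval_esymm_const {R : Type*} [CommRing R] (k : ℕ) (z : Fin c → R) (w : R)
    (hzw : ∀ l, z l = w) :
    MvPolynomial.eval z (esymm (Fin c) R k) = (c.choose k : R) * w ^ k := by
  rw [esymm]
  simp only [map_sum]
  rw [Finset.sum_congr rfl (fun t ht => ?_), Finset.sum_const, card_powersetCard, card_univ,
    Fintype.card_fin, nsmul_eq_mul]
  rw [mem_powersetCard] at ht
  rw [map_prod, Finset.prod_congr rfl (fun l _ => by rw [eval_X, hzw l]), Finset.prod_const, ht.2]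

end Aux16

namespace Aux16

lemma choose_id (m n : ℕ) :
    n.choose m * (n+2) * (n+1) = (m+1) * (m+2) * ((n+2).choose (m+2)) := by
  have h1 := Nat.add_one_mul_choose_eq n m
  have h2 := Nat.add_one_mul_choose_eq (n+1) (m+1)
  calc n.choose m * (n+2) * (n+1) = (n+2) * ((n+1) * n.choose m) := by ring
    _ = (n+2) * ((n+1).choose (m+1) * (m+1)) := by rw [h1]
    _ = (m+1) * ((n+2) * (n+1).choose (m+1)) := by ring
    _ = (m+1) * ((n+2).choose (m+2) * (m+2)) := by rw [h2]
    _ = (m+1) * (m+2) * ((n+2).choose (m+2)) := by ring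

lemma eval_pd2_quad (z : Fin c → ℂ) (i j : Fin c) :
    MvPolynomial.eval z (pderiv i (pderiv j (-(C (1/2:ℂ) * ∑ l, X l ^ 2))))
      = if i = j then -1 else 0 := by
  simp only [map_neg, pderiv_C_mul, map_sum, pderiv_pow, pderiv_X]
  simp only [Pi.single_apply, pow_one, mul_ite, mul_one, mul_zero, apply_ite (pderiv i),
    map_zero, Finset.sum_ite_eq', mem_univ, if_true, pderiv_mul, pderiv_X, ← C_eq_coe_nat,
    pderiv_C]
  by_cases h : i = j <;> simp [h, Pi.single_apply]

end Aux16

open Aux16 in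
theorem stmt_16 (k c : ℕ) (hk : 3 ≤ k) (hkc : k < c)
    (ε : ℝ) (hε : ε = 1 ∨ ε = -1)
    (x : Fin c → ℝ) (hx : ∀ i, x i = ε * (c : ℝ) ^ (-(1 : ℝ) / 2))
    (τ : ℂ) (hτ : τ ≠ 0)
    (hτk : τ ^ ((2 : ℤ) - (k : ℤ)) =
      (k : ℂ) * ((MvPolynomial.eval x (MvPolynomial.esymm (Fin c) ℝ k) : ℝ) : ℂ))
    (z : Fin c → ℂ) (hz : ∀ i, z i = τ * (x i : ℂ)) :
    (∀ i, hessGesymm c k z i i = -1) ∧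
    (∀ i j, i ≠ j →
      hessGesymm c k z i j = (((k : ℝ) - 1) / ((c : ℝ) - 1) : ℝ)) ∧
    (hessGesymm c k z).det =
      (-1 : ℂ) ^ (c - 1) * ((((k : ℝ) - 1) / ((c : ℝ) - 1) : ℝ) + 1) ^ (c - 1) *
        ((((k : ℝ) - 1) / ((c : ℝ) - 1) : ℝ) * ((c : ℂ) - 1) - 1) := by
  have hk2 : 2 ≤ k := by omega
  set wR : ℝ := ε * (c:ℝ) ^ (-(1:ℝ)/2) with hwR
  have hzw : ∀ l, z l = τ * (wR : ℂ) := fun l => by rw [hz l, hx l]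
  have hQ : ∀ i j, hessGesymm c k z i j =
      (if i = j then (-1:ℂ) else 0) +
      (if i = j then 0 else ((c-2).choose (k-2) : ℂ) * (τ * (wR:ℂ))^(k-2)) := by
    intro i j
    show MvPolynomial.eval z (pderiv i (pderiv j (_ + _))) = _
    rw [map_add, map_add, map_add, eval_pd2_quad,
      eval_pd2_esymm k hk2 z (τ * (wR:ℂ)) hzw i j]
  have hesymm := eval_esymm_const (R := ℝ) k x wR hx
  rw [hesymm] at hτk
  set K : ℂ := (k:ℂ) * ((c.choose k : ℕ) : ℂ) * (wR:ℂ)^k with hKdef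
  have hτk' : (τ ^ (k-2))⁻¹ = K := by
    have hexp : ((2:ℤ) - k) = -(((k-2:ℕ)) : ℤ) := by
      push_cast [Nat.cast_sub hk2]; ring
    rw [hexp, zpow_neg, zpow_natCast] at hτk
    rw [hτk, hKdef]; push_cast; ring
  have hτpow : τ^(k-2) = K⁻¹ := by rw [← hτk', inv_inv]
  have hK0 : K ≠ 0 := by rw [← hτk']; exact inv_ne_zero (pow_ne_zero _ hτ)
  have hkC : (k:ℂ) ≠ 0 := fun h => hK0 (by rw [hKdef, h]; ring)
  have hNC : ((c.choose k : ℕ):ℂ) ≠ 0 := fun h => hK0 (by rw [hKdef, h]; ring)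
  have hwC : ((wR:ℝ):ℂ) ≠ 0 := by
    intro h
    exact hK0 (by rw [hKdef, h, zero_pow (by omega), mul_zero])
  have hcC : (c:ℂ) ≠ 0 := Nat.cast_ne_zero.2 (by omega)
  have hc1C : (c:ℂ) - 1 ≠ 0 := by
    rw [sub_ne_zero]
    intro h
    have hh : c = 1 := by exact_mod_cast h
    omega
  have hw2 : wR^2 = (c:ℝ)⁻¹ := by
    have hε2 : ε^2 = 1 := by rcases hε with h|h <;> simp [h]
    have h2 : ((c:ℝ) ^ (-(1:ℝ)/2))^2 = (c:ℝ)⁻¹ := by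
      rw [← Real.rpow_natCast ((c:ℝ) ^ (-(1:ℝ)/2)) 2, ← Real.rpow_mul (by positivity)]
      norm_num [Real.rpow_neg_one]
    calc wR^2 = ε^2 * ((c:ℝ) ^ (-(1:ℝ)/2))^2 := by rw [hwR]; ring
      _ = (c:ℝ)⁻¹ := by rw [hε2, h2, one_mul]
  have hw2C : ((wR:ℝ):ℂ)^2 = ((c:ℂ))⁻¹ := by
    have := congrArg (fun r : ℝ => (r : ℂ)) hw2
    push_cast at this
    simpa using this
  have key : ((c-2).choose (k-2) : ℂ) * (c:ℂ) * ((c:ℂ)-1)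
      = ((k:ℂ)-1) * (k:ℂ) * ((c.choose k : ℕ):ℂ) := by
    have h := choose_id (k-2) (c-2)
    have e1 : c-2+2 = c := by omega
    have e2 : c-2+1 = c-1 := by omega
    have e3 : k-2+2 = k := by omega
    have e4 : k-2+1 = k-1 := by omega
    rw [e1, e2, e3, e4] at h
    have h' := congrArg (fun n : ℕ => (n:ℂ)) h
    push_cast [Nat.cast_sub (by omega : 1 ≤ c), Nat.cast_sub (by omega : 1 ≤ k)] at h'
    linear_combination h'
  set G : ℂ := ((((k:ℝ)-1)/((c:ℝ)-1) : ℝ) : ℂ) with hGdef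
  have hGval : G = ((k:ℂ)-1)/((c:ℂ)-1) := by rw [hGdef]; push_cast; ring
  have hoff : ((c-2).choose (k-2) : ℂ) * (τ * (wR:ℂ))^(k-2) = G := by
    rw [mul_pow, hτpow, hGval]
    have hwk : ((wR:ℝ):ℂ)^k = ((wR:ℝ):ℂ)^(k-2) * ((c:ℂ))⁻¹ := by
      rw [← hw2C, ← pow_add]
      congr 1
      omega
    rw [hKdef, hwk]
    have hwp : ((wR:ℝ):ℂ)^(k-2) ≠ 0 := pow_ne_zero _ hwC
    field_simp
    linear_combination key
  have hdiag : ∀ i, hessGesymm c k z i i = -1 := fun i => by rw [hQ]; simp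
  have hoffd : ∀ i j, i ≠ j → hessGesymm c k z i j = G := by
    intro i j hij
    rw [hQ, if_neg hij, if_neg hij, zero_add, hoff]
  refine ⟨hdiag, hoffd, ?_⟩
  have h1G : (1:ℂ) + G ≠ 0 := by
    have hk3 : (3:ℝ) ≤ (k:ℝ) := by exact_mod_cast hk
    have hc4 : (4:ℝ) ≤ (c:ℝ) := by exact_mod_cast (show 4 ≤ c by omega)
    have hgR : (0:ℝ) ≤ ((k:ℝ)-1)/((c:ℝ)-1) := div_nonneg (by linarith) (by linarith)
    intro h
    have h2 : ((1 + (((k:ℝ)-1)/((c:ℝ)-1)) : ℝ) : ℂ) = 0 := by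
      push_cast
      rw [hGdef] at h
      push_cast at h
      linear_combination h
    rw [Complex.ofReal_eq_zero] at h2
    linarith
  set a : ℂ := -(1 + G) with hadef
  have ha0 : a ≠ 0 := neg_ne_zero.2 h1G
  have hMeq : hessGesymm c k z
      = a • (1 + Matrix.replicateCol Unit (fun _ : Fin c => a⁻¹ * G) * Matrix.replicateRow Unit (fun _ : Fin c => (1:ℂ))) := by
    ext i j
    rw [Matrix.smul_apply, Matrix.add_apply, Matrix.one_apply, Matrix.mul_apply]
    simp only [Matrix.replicateCol_apply, Matrix.replicateRow_apply, Finset.univ_unique, Finset.sum_const,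
      Finset.card_singleton, one_smul, mul_one, smul_eq_mul]
    by_cases h : i = j
    · rw [if_pos h, h, hdiag j, mul_add, mul_one, ← mul_assoc,
        mul_inv_cancel₀ ha0, one_mul, hadef]
      ring
    · rw [if_neg h, hoffd i j h, zero_add, ← mul_assoc, mul_inv_cancel₀ ha0, one_mul]
  rw [hMeq, Matrix.det_smul, Matrix.det_one_add_replicateCol_mul_replicateRow]
  simp only [dotProduct, one_mul, Finset.sum_const, card_univ, Fintype.card_fin,
    nsmul_eq_mul]
  have hc' : c = (c-1) + 1 := by omega
  have hpow : a^c = a^(c-1) * a := by conv_lhs => rw [hc', pow_succ]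
  have hfin : a * (1 + (c:ℂ) * (a⁻¹ * G)) = G * ((c:ℂ)-1) - 1 := by
    have h' : a * (a⁻¹ * G) = G := by rw [← mul_assoc, mul_inv_cancel₀ ha0, one_mul]
    calc a * (1 + (c:ℂ) * (a⁻¹ * G)) = a + (c:ℂ) * (a * (a⁻¹ * G)) := by ring
      _ = a + (c:ℂ) * G := by rw [h']
      _ = G * ((c:ℂ)-1) - 1 := by rw [hadef]; ring
  have hneg : a ^ (c-1) = (-1:ℂ)^(c-1) * (1+G)^(c-1) := by
    rw [hadef, ← neg_one_mul, mul_pow]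
  rw [hpow, mul_assoc, hfin, hneg]
  ring
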